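/- Let M be an m×m complex matrix with M² = M (an idempotent), let d > 0 be a real number, and let 0 < r < d. Then the counterclockwise contour integral over the circle ∂B(d,r) of center d and radius r satisfies (i/(2π)) ∮_{∂B(d,r)} [(2M − I)·d − λ·I]⁻¹ dλ = M, where I is the m×m identity matrix and the integrand is the matrix inverse of (2M − I)·d − λ·I for λ on the contour. -/

import Mathlib

attribute [local instance] Matrix.normedAddCommGroup Matrix.normedSpace

open Metric Set

private lemma circleIntegral_add' {E : Type*} [NormedAddCommGroup E] [NormedSpace ℂ E]
    {f g : ℂ → E} {c : ℂ} {R : ℝ} (hf : CircleIntegrable f c R)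
    (hg : CircleIntegrable g c R) :
    (∮ z in C(c, R), (f z + g z)) = (∮ z in C(c, R), f z) + ∮ z in C(c, R), g z := by
  simp only [circleIntegral, smul_add, intervalIntegral.integral_add hf.out hg.out]

/-- For an idempotent complex matrix `M` and `0 < r < d`, the counterclockwise
contour integral of `λ ↦ ((2M - I)·d - λ·I)⁻¹` over the circle of center `d`
and radius `r`, multiplied by `i/(2π)`, equals `M`. -/
theorem residue_integral_of_idempotent (m : ℕ) (M : Matrix (Fin m) (Fin m) ℂ)
    (hM : M * M = M) (d r : ℝ) (hd : 0 < d) (hr : 0 < r) (hrd : r < d) :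
    (Complex.I / (2 * (Real.pi : ℂ))) •
      (∮ z in C((d : ℂ), r),
        ((d : ℂ) • (2 • M - 1) - z • (1 : Matrix (Fin m) (Fin m) ℂ))⁻¹) = M := by
  have hM1 : M * (1 - M) = 0 := by rw [mul_sub, mul_one, hM, sub_self]
  have hM2 : (1 - M) * M = 0 := by rw [sub_mul, one_mul, hM, sub_self]
  have hM3 : (1 - M) * (1 - M) = 1 - M := by rw [sub_mul, one_mul, mul_sub, mul_one, hM]; simp
  -- nonvanishing of denominators on the sphere
  have hne1 : ∀ z ∈ sphere (d : ℂ) r, (d : ℂ) - z ≠ 0 := by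
    intro z hz h0
    have : z = (d : ℂ) := by linear_combination -h0
    rw [mem_sphere_iff_norm, this, sub_self, norm_zero] at hz
    exact hr.ne hz
  have hne2 : ∀ z ∈ sphere (d : ℂ) r, -(d : ℂ) - z ≠ 0 := by
    intro z hz h0
    have hz' : ‖z - (d : ℂ)‖ = r := mem_sphere_iff_norm.mp hz
    have : z = -(d : ℂ) := by linear_combination -h0
    rw [this] at hz'
    have : ‖(-(d : ℂ)) - (d : ℂ)‖ = 2 * d := by
      rw [show (-(d : ℂ)) - (d : ℂ) = ((-(2 * d) : ℝ) : ℂ) by push_cast; ring,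
        Complex.norm_real, norm_neg, Real.norm_eq_abs, abs_of_pos (by positivity)]
    rw [this] at hz'
    linarith
  -- the integrand in resolvent form
  have key : EqOn (fun z : ℂ => ((d : ℂ) • (2 • M - 1) - z • (1 : Matrix (Fin m) (Fin m) ℂ))⁻¹)
      (fun z : ℂ => ((d : ℂ) - z)⁻¹ • M + (-(d : ℂ) - z)⁻¹ • (1 - M)) (sphere (d : ℂ) r) := by
    intro z hz
    have ha := hne1 z hz
    have hb := hne2 z hz
    have hA : (d : ℂ) • (2 • M - 1) - z • (1 : Matrix (Fin m) (Fin m) ℂ)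
        = ((d : ℂ) - z) • M + (-(d : ℂ) - z) • (1 - M) := by
      rw [show (2 : ℕ) • M = (2 : ℂ) • M by simp [two_smul]]
      module
    refine Matrix.inv_eq_right_inv ?_
    rw [hA]
    simp only [add_mul, mul_add, Matrix.smul_mul, Matrix.mul_smul, hM, hM1, hM2, hM3,
      smul_smul, smul_zero, add_zero, zero_add, inv_mul_cancel₀ ha, inv_mul_cancel₀ hb,
      one_smul]
    abel
  -- integrability
  have hi1 : CircleIntegrable (fun z : ℂ => ((d : ℂ) - z)⁻¹ • M) (d : ℂ) r := by
    refine ContinuousOn.circleIntegrable hr.le ?_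
    exact (ContinuousOn.inv₀ (by fun_prop) hne1).smul continuousOn_const
  have hi2 : CircleIntegrable (fun z : ℂ => (-(d : ℂ) - z)⁻¹ • (1 - M)) (d : ℂ) r := by
    refine ContinuousOn.circleIntegrable hr.le ?_
    exact (ContinuousOn.inv₀ (by fun_prop) hne2).smul continuousOn_const
  rw [circleIntegral.integral_congr hr.le key, circleIntegral_add' hi1 hi2,
    circleIntegral.integral_smul_const, circleIntegral.integral_smul_const]
  -- first scalar integral
  have hI1 : (∮ z in C((d : ℂ), r), ((d : ℂ) - z)⁻¹) = -(2 * Real.pi * Complex.I) := by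
    have : ∀ z : ℂ, ((d : ℂ) - z)⁻¹ = (-1 : ℂ) • (z - (d : ℂ))⁻¹ := by
      intro z; rw [← neg_sub z (d : ℂ), inv_neg]; simp
    simp only [this, circleIntegral.integral_smul]
    rw [circleIntegral.integral_sub_inv_of_mem_ball (mem_ball_self hr)]
    simp
  -- second scalar integral vanishes (Cauchy–Goursat, pole outside)
  have hI2 : (∮ z in C((d : ℂ), r), (-(d : ℂ) - z)⁻¹) = 0 := by
    have hne : ∀ z ∈ closedBall (d : ℂ) r, -(d : ℂ) - z ≠ 0 := by
      intro z hz h0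
      have hz' : ‖z - (d : ℂ)‖ ≤ r := mem_closedBall_iff_norm.mp hz
      have : z = -(d : ℂ) := by linear_combination -h0
      rw [this] at hz'
      have : ‖(-(d : ℂ)) - (d : ℂ)‖ = 2 * d := by
        rw [show (-(d : ℂ)) - (d : ℂ) = ((-(2 * d) : ℝ) : ℂ) by push_cast; ring,
          Complex.norm_real, norm_neg, Real.norm_eq_abs, abs_of_pos (by positivity)]
      rw [this] at hz'
      linarith
    refine Complex.circleIntegral_eq_zero_of_differentiable_on_off_countable hr.le
      countable_empty (ContinuousOn.inv₀ (by fun_prop) hne) ?_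
    intro z hz
    have : -(d : ℂ) - z ≠ 0 := hne z (ball_subset_closedBall hz.1)
    exact ((differentiableAt_const _).sub differentiableAt_id).inv this
  rw [hI1, hI2, zero_smul, add_zero, smul_smul]
  have hπ : (Real.pi : ℂ) ≠ 0 := Complex.ofReal_ne_zero.mpr Real.pi_ne_zero
  rw [show Complex.I / (2 * (Real.pi : ℂ)) * -(2 * Real.pi * Complex.I) = 1 by
    field_simp
    rw [Complex.I_sq]
    ring]
  exact one_smul _ _
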